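/- Let c, a, u, K ∈ ℝ with c ≠ 0, c ≠ −1, and a ≠ 0, and suppose that −(a·y^{c+1}/(c+1) + u)·a·c·y^{c−1} = K·y^{2c} for all y > 0. Then u = 0 and K = −a²·c/(c+1). -/
import Mathlib


theorem stmt17 (c a u K : ℝ) (hc0 : c ≠ 0) (hc1 : c ≠ -1) (ha : a ≠ 0)
    (h : ∀ y : ℝ, 0 < y →
      -(a * y ^ (c + 1) / (c + 1) + u) * (a * c * y ^ (c - 1)) = K * y ^ (2 * c)) :
    u = 0 ∧ K = -a ^ 2 * c / (c + 1) := by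
  have hc1' : c + 1 ≠ 0 := fun hh => hc1 (by linarith)
  have key : ∀ y : ℝ, 0 < y →
      (K + a ^ 2 * c / (c + 1)) * y ^ (2 * c) + (u * a * c) * y ^ (c - 1) = 0 := by
    intro y hy
    have hy1 : y ^ (c + 1) * y ^ (c - 1) = y ^ (2 * c) := by
      rw [← Real.rpow_add hy]; ring_nf
    have := h y hy
    have expand : -(a * y ^ (c + 1) / (c + 1) + u) * (a * c * y ^ (c - 1))
        = -(a ^ 2 * c / (c + 1)) * (y ^ (c + 1) * y ^ (c - 1)) - u * a * c * y ^ (c - 1) := by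
      field_simp; ring
    rw [expand, hy1] at this
    linarith
  have k1 := key 1 one_pos
  simp [Real.one_rpow] at k1
  have k2 := key 2 two_pos
  have hne : (2 : ℝ) ^ (2 * c) ≠ (2 : ℝ) ^ (c - 1) := by
    intro hh
    have h1 : ¬ ((2:ℝ) ^ (2 * c) < 2 ^ (c - 1)) := by simp [hh]
    have h2 : ¬ ((2:ℝ) ^ (c - 1) < 2 ^ (2 * c)) := by simp [hh]
    rw [Real.rpow_lt_rpow_left_iff (by norm_num)] at h1 h2
    have : 2 * c = c - 1 := le_antisymm (not_lt.1 h2) (not_lt.1 h1)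
    exact hc1 (by linarith)
  have hB : u * a * c = -(K + a ^ 2 * c / (c + 1)) := by linarith
  rw [hB] at k2
  have hA : K + a ^ 2 * c / (c + 1) = 0 := by
    have hd : (2 : ℝ) ^ (2 * c) - (2 : ℝ) ^ (c - 1) ≠ 0 := sub_ne_zero.2 hne
    have hz : (K + a ^ 2 * c / (c + 1)) * ((2 : ℝ) ^ (2 * c) - (2 : ℝ) ^ (c - 1)) = 0 := by
      linear_combination k2
    exact (mul_eq_zero.1 hz).resolve_right hd
  have hu : u * a * c = 0 := by rw [hB, hA]; ring
  constructor
  · rcases mul_eq_zero.1 hu with h' | h'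
    · rcases mul_eq_zero.1 h' with h'' | h''
      · exact h''
      · exact absurd h'' ha
    · exact absurd h' hc0
  · have : K = -(a ^ 2 * c / (c + 1)) := by linarith
    rw [this]; ring
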